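/- arXiv:1907.02648 — 2 statements merged into one kernel-verified Lean document; each statement's English description precedes it below -/
import Mathlib

section
/- Let (Ω, μ) be a probability space and X, Y : Ω → ℂᴹ be independent random vectors with E{X_m} = 0 for all m, such that all entries and all entrywise second-moment products are integrable and |XᴴY|² is integrable. Let R_X and R_Y be their correlation matrices, (R_X)_{m,m'} = E{X_m·conj(X_{m'})}, (R_Y)_{m,m'} = E{Y_m·conj(Y_{m'})}, and assume Re(tr R_X) > 0 and Re(tr R_Y) > 0. Then the variance of the normalized inner product satisfies: E{|XᴴY|²/(Re(tr R_X)·Re(tr R_Y))} − |E{XᴴY}|²/(Re(tr R_X)·Re(tr R_Y)) = Re(tr(R_X·R_Y))/(Re(tr R_X)·Re(tr R_Y)); in particular E{XᴴY} = 0, E{‖X‖²} = Re(tr R_X), E{‖Y‖²} = Re(tr R_Y), and the variance of XᴴY/√(E{‖X‖²}·E{‖Y‖²}) equals tr(R_X·R_Y)/(tr(R_X)·tr(R_Y)). -/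
open Matrix MeasureTheory ProbabilityTheory

lemma mul_star_self_c (z : ℂ) : z * star z = ((‖z‖ ^ 2 : ℝ) : ℂ) := by
  rw [show star z = (starRingEnd ℂ) z from rfl, Complex.mul_conj, Complex.normSq_eq_norm_sq]

lemma measurable_star_c : Measurable (fun z : ℂ => star z) :=
  Complex.continuous_conj.measurable

lemma integrable_star_c {Ω : Type*} [MeasurableSpace Ω] {μ : Measure Ω} {f : Ω → ℂ}
    (hf : Integrable f μ) : Integrable (fun ω => star (f ω)) μ :=
  ⟨Complex.continuous_conj.comp_aestronglyMeasurable hf.1,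
    by simpa [HasFiniteIntegral] using hf.2⟩

lemma indep_integral_mul_complex {Ω : Type*} [MeasurableSpace Ω] {μ : Measure Ω}
    {f g : Ω → ℂ} (h : IndepFun f g μ) (hf : Integrable f μ) (hg : Integrable g μ) :
    ∫ ω, f ω * g ω ∂μ = (∫ ω, f ω ∂μ) * ∫ ω, g ω ∂μ := by
  have hac : IndepFun (fun ω => (f ω).re) (fun ω => (g ω).re) μ :=
    h.comp Complex.measurable_re Complex.measurable_re
  have had : IndepFun (fun ω => (f ω).re) (fun ω => (g ω).im) μ :=
    h.comp Complex.measurable_re Complex.measurable_im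
  have hbc : IndepFun (fun ω => (f ω).im) (fun ω => (g ω).re) μ :=
    h.comp Complex.measurable_im Complex.measurable_re
  have hbd : IndepFun (fun ω => (f ω).im) (fun ω => (g ω).im) μ :=
    h.comp Complex.measurable_im Complex.measurable_im
  have hfr : Integrable (fun ω => (f ω).re) μ := hf.re
  have hfi : Integrable (fun ω => (f ω).im) μ := hf.im
  have hgr : Integrable (fun ω => (g ω).re) μ := hg.re
  have hgi : Integrable (fun ω => (g ω).im) μ := hg.im
  have hfg : Integrable (fun ω => f ω * g ω) μ := h.integrable_mul hf hg
  have h1 : ∫ ω, (f ω).re * (g ω).re ∂μ = (∫ ω, (f ω).re ∂μ) * ∫ ω, (g ω).re ∂μ :=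
    hac.integral_fun_mul_eq_mul_integral hfr.1 hgr.1
  have h2 : ∫ ω, (f ω).re * (g ω).im ∂μ = (∫ ω, (f ω).re ∂μ) * ∫ ω, (g ω).im ∂μ :=
    had.integral_fun_mul_eq_mul_integral hfr.1 hgi.1
  have h3 : ∫ ω, (f ω).im * (g ω).re ∂μ = (∫ ω, (f ω).im ∂μ) * ∫ ω, (g ω).re ∂μ :=
    hbc.integral_fun_mul_eq_mul_integral hfi.1 hgr.1
  have h4 : ∫ ω, (f ω).im * (g ω).im ∂μ = (∫ ω, (f ω).im ∂μ) * ∫ ω, (g ω).im ∂μ :=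
    hbd.integral_fun_mul_eq_mul_integral hfi.1 hgi.1
  have hre : ∀ {u : Ω → ℂ}, Integrable u μ → (∫ ω, u ω ∂μ).re = ∫ ω, (u ω).re ∂μ := by
    intro u hu
    simpa [RCLike.re_eq_complex_re] using (integral_re (𝕜 := ℂ) hu).symm
  have him : ∀ {u : Ω → ℂ}, Integrable u μ → (∫ ω, u ω ∂μ).im = ∫ ω, (u ω).im ∂μ := by
    intro u hu
    simpa [RCLike.im_eq_complex_im] using (integral_im (𝕜 := ℂ) hu).symm
  apply Complex.ext
  · rw [hre hfg, Complex.mul_re, hre hf, hre hg, him hf, him hg, ← h1, ← h4]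
    rw [show (fun ω => (f ω * g ω).re) = fun ω => (f ω).re * (g ω).re - (f ω).im * (g ω).im
        from funext fun ω => Complex.mul_re _ _]
    exact integral_sub ((hac.integrable_mul hfr hgr)) ((hbd.integrable_mul hfi hgi))
  · rw [him hfg, Complex.mul_im, hre hf, hre hg, him hf, him hg, ← h2, ← h3]
    rw [show (fun ω => (f ω * g ω).im) = fun ω => (f ω).re * (g ω).im + (f ω).im * (g ω).re
        from funext fun ω => Complex.mul_im _ _]
    exact integral_add ((had.integrable_mul hfr hgi)) ((hbc.integrable_mul hfi hgr))

/-- Second moments: `E ∑ ‖W_m‖² = Re tr R`. -/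
lemma trace_re_eq_integral_norm_sq {M : ℕ} {Ω : Type*} [MeasurableSpace Ω]
    {μ : Measure Ω} (W : Ω → Fin M → ℂ)
    (hWW : ∀ m m', Integrable (fun ω => W ω m * star (W ω m')) μ)
    (R : Matrix (Fin M) (Fin M) ℂ)
    (hR : ∀ m m', R m m' = ∫ ω, W ω m * star (W ω m') ∂μ) :
    (∫ ω, ∑ m, ‖W ω m‖ ^ 2 ∂μ) = (R.trace).re := by
  have key : ∀ m, (R m m) = ((∫ ω, ‖W ω m‖ ^ 2 ∂μ : ℝ) : ℂ) := by
    intro m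
    rw [hR m m]
    rw [show (fun ω => W ω m * star (W ω m)) = fun ω => ((‖W ω m‖ ^ 2 : ℝ) : ℂ) from
      funext fun ω => mul_star_self_c _]
    exact integral_ofReal
  have hint : ∀ m, Integrable (fun ω => ‖W ω m‖ ^ 2) μ := by
    intro m
    have h := (hWW m m).re
    refine h.congr (ae_of_all _ fun ω => ?_)
    show RCLike.re (W ω m * star (W ω m)) = ‖W ω m‖ ^ 2
    rw [mul_star_self_c]
    exact Complex.ofReal_re _
  rw [Matrix.trace]
  rw [integral_finset_sum _ (fun m _ => hint m)]
  rw [Complex.re_sum]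
  refine Finset.sum_congr rfl fun m _ => ?_
  rw [show R.diag m = R m m from rfl, key m, Complex.ofReal_re]

/-- Equation (16) of the paper (favorable propagation): for independent random
vectors `X, Y : Ω → ℂᴹ` with `X` zero-mean and correlation matrices `R_X, R_Y`
having positive traces, one has `E{XᴴY} = 0`, `E{‖X‖²} = Re tr R_X`,
`E{‖Y‖²} = Re tr R_Y`, and the variance of the normalized inner product
`XᴴY/√(E{‖X‖²}·E{‖Y‖²})` equals `tr(R_X R_Y)/(tr R_X · tr R_Y)`. -/
theorem favorable_propagation_variance {M : ℕ} {Ω : Type*} [MeasurableSpace Ω]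
    (μ : Measure Ω) [IsProbabilityMeasure μ]
    (X Y : Ω → Fin M → ℂ) (hX : Measurable X) (hY : Measurable Y)
    (hindep : ProbabilityTheory.IndepFun X Y μ)
    (hXmean : ∀ m, (∫ ω, X ω m ∂μ) = 0)
    (hXint : ∀ m, Integrable (fun ω => X ω m) μ)
    (hYint : ∀ m, Integrable (fun ω => Y ω m) μ)
    (hXX : ∀ m m', Integrable (fun ω => X ω m * star (X ω m')) μ)
    (hYY : ∀ m m', Integrable (fun ω => Y ω m * star (Y ω m')) μ)
    (hZ2 : Integrable (fun ω => ‖star (X ω) ⬝ᵥ Y ω‖ ^ 2) μ)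
    (RX RY : Matrix (Fin M) (Fin M) ℂ)
    (hRX : ∀ m m', RX m m' = ∫ ω, X ω m * star (X ω m') ∂μ)
    (hRY : ∀ m m', RY m m' = ∫ ω, Y ω m * star (Y ω m') ∂μ)
    (htrX : 0 < (RX.trace).re) (htrY : 0 < (RY.trace).re) :
    (∫ ω, star (X ω) ⬝ᵥ Y ω ∂μ) = 0 ∧
    (∫ ω, ∑ m, ‖X ω m‖ ^ 2 ∂μ) = (RX.trace).re ∧
    (∫ ω, ∑ m, ‖Y ω m‖ ^ 2 ∂μ) = (RY.trace).re ∧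
    (∫ ω, ‖star (X ω) ⬝ᵥ Y ω‖ ^ 2 / ((RX.trace).re * (RY.trace).re) ∂μ)
        - ‖∫ ω, star (X ω) ⬝ᵥ Y ω ∂μ‖ ^ 2 / ((RX.trace).re * (RY.trace).re)
      = ((RX * RY).trace).re / ((RX.trace).re * (RY.trace).re) ∧
    (∫ ω, ‖(star (X ω) ⬝ᵥ Y ω) /
          (Real.sqrt ((RX.trace).re * (RY.trace).re) : ℂ)‖ ^ 2 ∂μ)
        - ‖∫ ω, (star (X ω) ⬝ᵥ Y ω) /
              (Real.sqrt ((RX.trace).re * (RY.trace).re) : ℂ) ∂μ‖ ^ 2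
      = ((RX * RY).trace).re / ((RX.trace).re * (RY.trace).re) := by
  have hZeq : ∀ ω, star (X ω) ⬝ᵥ Y ω = ∑ m, star (X ω m) * Y ω m := by
    intro ω; simp [dotProduct, Pi.star_apply]
  -- independence of composed coordinate functions
  have hcomp : ∀ (φ ψ : (Fin M → ℂ) → ℂ), Measurable φ → Measurable ψ →
      IndepFun (fun ω => φ (X ω)) (fun ω => ψ (Y ω)) μ :=
    fun φ ψ hφ hψ => hindep.comp hφ hψ
  -- integrability of star X m
  have hXstarint : ∀ m, Integrable (fun ω => star (X ω m)) μ :=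
    fun m => integrable_star_c (hXint m)
  -- E[XᴴY] = 0
  have hsummand_int : ∀ m, Integrable (fun ω => star (X ω m) * Y ω m) μ := by
    intro m
    exact (hcomp (fun v => star (v m)) (fun v => v m)
      (measurable_star_c.comp (measurable_pi_apply m)) (measurable_pi_apply m)).integrable_mul
      (hXstarint m) (hYint m)
  have hZ0 : (∫ ω, star (X ω) ⬝ᵥ Y ω ∂μ) = 0 := by
    simp only [hZeq]
    rw [integral_finset_sum _ (fun m _ => hsummand_int m)]
    refine Finset.sum_eq_zero fun m _ => ?_
    rw [indep_integral_mul_complex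
      (hcomp (fun v => star (v m)) (fun v => v m)
        (measurable_star_c.comp (measurable_pi_apply m)) (measurable_pi_apply m))
      (hXstarint m) (hYint m)]
    have : (∫ ω, star (X ω m) ∂μ) = 0 := by
      have h := integral_conj (μ := μ) (f := fun ω => X ω m)
      rw [hXmean m, map_zero] at h
      exact h
    rw [this, zero_mul]
  -- second moments
  have hEX : (∫ ω, ∑ m, ‖X ω m‖ ^ 2 ∂μ) = (RX.trace).re :=
    trace_re_eq_integral_norm_sq X hXX RX hRX
  have hEY : (∫ ω, ∑ m, ‖Y ω m‖ ^ 2 ∂μ) = (RY.trace).re :=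
    trace_re_eq_integral_norm_sq Y hYY RY hRY
  -- hermitian-type identities
  have hRXh : ∀ m m', (starRingEnd ℂ) (RX m m') = ∫ ω, star (X ω m) * X ω m' ∂μ := by
    intro m m'
    rw [hRX m m', ← integral_conj]
    congr 1; funext ω
    rw [show (starRingEnd ℂ) (X ω m * star (X ω m')) = star (X ω m * star (X ω m')) from rfl,
      StarMul.star_mul, star_star]
    ring
  have hRYh : ∀ m m', (starRingEnd ℂ) (RY m m') = RY m' m := by
    intro m m'
    rw [hRY m m', hRY m' m, ← integral_conj]
    congr 1; funext ω
    rw [show (starRingEnd ℂ) (Y ω m * star (Y ω m')) = star (Y ω m * star (Y ω m')) from rfl,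
      StarMul.star_mul, star_star]
  -- integrability of the X-part and Y-part in the expansion
  have hXpart : ∀ m m', Integrable (fun ω => star (X ω m) * X ω m') μ := by
    intro m m'
    exact (hXX m' m).congr (ae_of_all _ fun ω => mul_comm _ _)
  -- per-term independence
  have hindep_tm : ∀ m m', IndepFun (fun ω => star (X ω m) * X ω m')
      (fun ω => Y ω m * star (Y ω m')) μ :=
    fun m m' => hcomp (fun v => star (v m) * v m') (fun v => v m * star (v m'))
      ((measurable_star_c.comp (measurable_pi_apply m)).mul (measurable_pi_apply m'))
      ((measurable_pi_apply m).mul (measurable_star_c.comp (measurable_pi_apply m')))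
  have hterm_int : ∀ m m', Integrable
      (fun ω => (star (X ω m) * X ω m') * (Y ω m * star (Y ω m'))) μ :=
    fun m m' => (hindep_tm m m').integrable_mul (hXpart m m') (hYY m m')
  -- pointwise expansion of ‖Z‖²
  have hW : ∀ ω, ((‖star (X ω) ⬝ᵥ Y ω‖ ^ 2 : ℝ) : ℂ)
      = ∑ m, ∑ m', (star (X ω m) * X ω m') * (Y ω m * star (Y ω m')) := by
    intro ω
    have h1 : ((‖star (X ω) ⬝ᵥ Y ω‖ ^ 2 : ℝ) : ℂ)
        = (star (X ω) ⬝ᵥ Y ω) * star (star (X ω) ⬝ᵥ Y ω) :=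
      (mul_star_self_c _).symm
    rw [h1, hZeq, star_sum, Finset.sum_mul_sum]
    refine Finset.sum_congr rfl fun m _ => Finset.sum_congr rfl fun m' _ => ?_
    rw [StarMul.star_mul, star_star]
    ring
  -- main identity
  have hmain : (∫ ω, ‖star (X ω) ⬝ᵥ Y ω‖ ^ 2 ∂μ) = ((RX * RY).trace).re := by
    have hS0 : (∫ ω, ((‖star (X ω) ⬝ᵥ Y ω‖ ^ 2 : ℝ) : ℂ) ∂μ)
        = ((∫ ω, ‖star (X ω) ⬝ᵥ Y ω‖ ^ 2 ∂μ : ℝ) : ℂ) := integral_ofReal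
    have hS : ((∫ ω, ‖star (X ω) ⬝ᵥ Y ω‖ ^ 2 ∂μ : ℝ) : ℂ)
        = ∑ m, ∑ m', (starRingEnd ℂ) (RX m m') * RY m m' := by
      rw [← hS0]
      simp only [hW]
      rw [integral_finset_sum _ (fun m _ => integrable_finset_sum _
        (fun m' _ => hterm_int m m'))]
      refine Finset.sum_congr rfl fun m _ => ?_
      rw [integral_finset_sum _ (fun m' _ => hterm_int m m')]
      refine Finset.sum_congr rfl fun m' _ => ?_
      rw [indep_integral_mul_complex (hindep_tm m m') (hXpart m m') (hYY m m'),
        ← hRXh m m', ← hRY m m']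
    have htr : (RX * RY).trace
        = (starRingEnd ℂ) (∑ m, ∑ m', (starRingEnd ℂ) (RX m m') * RY m m') := by
      simp only [map_sum, _root_.map_mul, Complex.conj_conj]
      rw [Matrix.trace]
      refine Finset.sum_congr rfl fun m _ => ?_
      rw [show (RX * RY).diag m = ∑ k, RX m k * RY k m from by
        simp [Matrix.diag, Matrix.mul_apply]]
      exact Finset.sum_congr rfl fun k _ => by rw [← hRYh m k]
    rw [htr, ← hS, Complex.conj_ofReal, Complex.ofReal_re]
  refine ⟨hZ0, hEX, hEY, ?_, ?_⟩
  · rw [hZ0]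
    simp only [norm_zero]
    rw [integral_div, hmain]
    norm_num
  · have hc : (0:ℝ) ≤ (RX.trace).re * (RY.trace).re :=
      le_of_lt (mul_pos htrX htrY)
    have hnc : ‖((Real.sqrt ((RX.trace).re * (RY.trace).re) : ℝ) : ℂ)‖ ^ 2
        = (RX.trace).re * (RY.trace).re := by
      rw [Complex.norm_real, Real.norm_eq_abs, abs_of_nonneg (Real.sqrt_nonneg _),
        Real.sq_sqrt hc]
    have hpt : ∀ ω, ‖(star (X ω) ⬝ᵥ Y ω) /
        ((Real.sqrt ((RX.trace).re * (RY.trace).re) : ℝ) : ℂ)‖ ^ 2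
        = ‖star (X ω) ⬝ᵥ Y ω‖ ^ 2 / ((RX.trace).re * (RY.trace).re) := by
      intro ω
      rw [norm_div, div_pow, hnc]
    have hiz : (∫ ω, (star (X ω) ⬝ᵥ Y ω) /
        ((Real.sqrt ((RX.trace).re * (RY.trace).re) : ℝ) : ℂ) ∂μ) = 0 := by
      rw [integral_div, hZ0, zero_div]
    rw [hiz]
    simp only [hpt, norm_zero]
    rw [integral_div, hmain]
    norm_num
end

section
/- Let Q be a (τM)×(τM) Hermitian positive definite complex matrix indexed by pairs (i,m) with i ∈ {1,…,τ}, m ∈ {1,…,M}, let R be an M×M Hermitian positive semidefinite complex matrix, let φ ∈ ℂ^τ, and let p ≥ 0. Let A be the (τM)×M matrix with entries A_{(i,m),m'} = φᵢ·R_{m,m'} (i.e., A = φ ⊗ R, the Kronecker product of the column vector φ with R). If Q − p·(φφᴴ) ⊗ R is positive semidefinite, then the matrix C = R − p·AᴴQ⁻¹A is Hermitian positive semidefinite. -/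
open Matrix
open scoped Kronecker ComplexOrder

/-- Deterministic content of Lemma 1 of the paper: the MMSE estimation error
correlation matrix `C = R − p·AᴴQ⁻¹A`, with `A = φ ⊗ R`, is Hermitian positive
semidefinite, provided `Q` is Hermitian positive definite, `R` is Hermitian
positive semidefinite, `p ≥ 0`, and `Q − p·(φφᴴ) ⊗ R` is positive
semidefinite. -/
theorem mmse_error_correlation_posSemidef {τ M : ℕ}
    (Q : Matrix (Fin τ × Fin M) (Fin τ × Fin M) ℂ) (hQ : Q.PosDef)
    (R : Matrix (Fin M) (Fin M) ℂ) (hR : R.PosSemidef)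
    (φ : Fin τ → ℂ) (p : ℝ) (hp : 0 ≤ p)
    (A : Matrix (Fin τ × Fin M) (Fin M) ℂ)
    (hA : A = Matrix.of fun (q : Fin τ × Fin M) (m' : Fin M) => φ q.1 * R q.2 m')
    (hQR : (Q - (p : ℂ) • (vecMulVec φ (star φ) ⊗ₖ R)).PosSemidef) :
    (R - (p : ℂ) • (Aᴴ * Q⁻¹ * A)).PosSemidef := by
  have := hQ.isUnit.invertible
  set c : ℂ := ((Real.sqrt p : ℝ) : ℂ) with hc_def
  have hcc : c * c = (p : ℂ) := by
    rw [hc_def, ← Complex.ofReal_mul, Real.mul_self_sqrt hp]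
  have hcstar : star c = c := by
    simp [hc_def, Complex.star_def, Complex.conj_ofReal]
  -- the matrix B with B (i,m) m' = φ i * δ_{m m'}
  set B : Matrix (Fin τ × Fin M) (Fin M) ℂ :=
    Matrix.of (fun (q : Fin τ × Fin M) (m' : Fin M) => φ q.1 * (if q.2 = m' then 1 else 0))
    with hB_def
  have hBR : B * R = A := by
    ext q m'
    simp [hB_def, hA, Matrix.mul_apply, ite_mul, Finset.sum_ite_eq, mul_assoc]
  have hK : B * R * Bᴴ = vecMulVec φ (star φ) ⊗ₖ R := by
    rw [hBR]
    ext q q'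
    simp [hA, hB_def, Matrix.mul_apply, Matrix.conjTranspose_apply, vecMulVec_apply,
      apply_ite, mul_ite, Finset.sum_ite_eq]
    ring
  have hRBH : R * Bᴴ = Aᴴ := by
    rw [← hBR, Matrix.conjTranspose_mul, hR.1.eq]
  have hQinv : Q⁻¹ᴴ = Q⁻¹ := hQ.1.inv.eq
  set W : Matrix (Fin τ × Fin M) (Fin M) ℂ := (-c) • (Q⁻¹ * A) with hW_def
  set V : Matrix (Fin M) (Fin M) ℂ := Bᴴ * W with hV_def
  set Z : Matrix (Fin M) (Fin M) ℂ := c • V + 1 with hZ_def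
  set T : Matrix (Fin M) (Fin M) ℂ := Aᴴ * Q⁻¹ * A with hT_def
  have hWH : Wᴴ = (-c) • (Aᴴ * Q⁻¹) := by
    rw [hW_def, Matrix.conjTranspose_smul, Matrix.conjTranspose_mul, hQinv]
    simp [hcstar]
  have f2 : Wᴴ * Q * W = (p : ℂ) • T := by
    rw [hWH, hW_def, Matrix.smul_mul, Matrix.smul_mul, Matrix.mul_smul, smul_smul,
      neg_mul_neg, hcc, hT_def]
    congr 1
    rw [Matrix.mul_assoc (Aᴴ * Q⁻¹) Q _, ← Matrix.mul_assoc Q _ _,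
      Matrix.mul_inv_of_invertible, Matrix.one_mul]
  have f5 : Vᴴ * R = (-c) • T := by
    rw [hV_def, Matrix.conjTranspose_mul, Matrix.conjTranspose_conjTranspose,
      Matrix.mul_assoc, hBR, hWH, Matrix.smul_mul, Matrix.mul_assoc, hT_def,
      Matrix.mul_assoc]
  have f6 : R * V = (-c) • T := by
    rw [hV_def, ← Matrix.mul_assoc, hRBH, hW_def, Matrix.mul_smul, hT_def,
      Matrix.mul_assoc]
  -- the key identity
  have key : R - (p : ℂ) • T =
      Wᴴ * (Q - (p : ℂ) • (vecMulVec φ (star φ) ⊗ₖ R)) * W + Zᴴ * R * Z := by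
    have hVH : Vᴴ = Wᴴ * B := by
      rw [hV_def, Matrix.conjTranspose_mul, Matrix.conjTranspose_conjTranspose]
    have hKW : Wᴴ * ((p : ℂ) • (vecMulVec φ (star φ) ⊗ₖ R)) * W
        = (p : ℂ) • (Vᴴ * R * V) := by
      rw [← hK, hVH, hV_def]
      simp only [Matrix.mul_smul, Matrix.smul_mul, Matrix.mul_assoc]
    have hZH : Zᴴ = c • Vᴴ + 1 := by
      rw [hZ_def, Matrix.conjTranspose_add, Matrix.conjTranspose_smul, hcstar,
        Matrix.conjTranspose_one]
    have t1 : (c • (Vᴴ * R)) * (c • V) = (p : ℂ) • (Vᴴ * R * V) := by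
      rw [Matrix.smul_mul, Matrix.mul_smul, smul_smul, hcc]
    have t2 : c • (Vᴴ * R) = (-(p : ℂ)) • T := by
      rw [f5, smul_smul, mul_neg, hcc, neg_smul]
    have t3 : R * (c • V) = (-(p : ℂ)) • T := by
      rw [Matrix.mul_smul, f6, smul_smul, mul_neg, hcc, neg_smul]
    have hZRZ : Zᴴ * R * Z = (p : ℂ) • (Vᴴ * R * V) + ((-(p : ℂ)) • T + ((-(p : ℂ)) • T + R)) := by
      have h1 : Zᴴ * R = c • (Vᴴ * R) + R := by
        rw [hZH, Matrix.add_mul, Matrix.smul_mul, Matrix.one_mul]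
      rw [h1, hZ_def, Matrix.add_mul, Matrix.mul_add, Matrix.mul_add, Matrix.mul_one,
        Matrix.mul_one, t1, t3, t2]
      abel
    rw [Matrix.mul_sub, Matrix.sub_mul, hKW, f2, hZRZ]
    module
  rw [key]
  exact ((hQR.conjTranspose_mul_mul_same W).add
    (hR.conjTranspose_mul_mul_same Z))
end
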